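/- Fix a ∈ (0,1) and define g : ℝ → ℝ by g(s) = ((1−a)/a)·min{s, 0}, and G : ℝⁿ → ℝⁿ by G(x)_i = g(x_i) for each i. Then G is monotone with respect to the ℓ∞ norm in the sense that for every α ≥ 0 and all x, y ∈ ℝⁿ, ‖(x + αG(x)) − (y + αG(y))‖_∞ ≥ ‖x − y‖_∞; consequently, for every α > 0, if x + αG(x) = y + αG(y) then x = y, and the resolvent (Id + αG)^{−1} is nonexpansive with respect to ‖·‖_∞ on its domain. -/

import Mathlib

/-- The ℓ∞ norm on ℝⁿ. -/
noncomputable def infNorm {n : ℕ} (x : Fin n → ℝ) : ℝ := ⨆ i, |x i|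

lemma key_ineq (c α s t : ℝ) (hc : 0 ≤ c) (hα : 0 ≤ α) :
    |s - t| ≤ |s - t + α * (c * min s 0) - α * (c * min t 0)| := by
  rcases le_total t s with h | h
  · have hd : α * (c * min t 0) ≤ α * (c * min s 0) := by
      exact mul_le_mul_of_nonneg_left
        (mul_le_mul_of_nonneg_left (min_le_min h (le_refl (0:ℝ))) hc) hα
    rw [abs_of_nonneg (by linarith), abs_of_nonneg (by linarith)]
    linarith
  · have hd : α * (c * min s 0) ≤ α * (c * min t 0) := by
      exact mul_le_mul_of_nonneg_left
        (mul_le_mul_of_nonneg_left (min_le_min h (le_refl (0:ℝ))) hc) hα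
    rw [abs_of_nonpos (by linarith), abs_of_nonpos (by linarith)]
    linarith

/-- The entrywise map G(x)_i = ((1-a)/a)·min{x_i, 0} is monotone w.r.t. ℓ∞:
`Id + αG` is expansive, hence injective, and its inverse is nonexpansive. -/
theorem stmt_17 {n : ℕ} (a : ℝ) (ha : a ∈ Set.Ioo (0 : ℝ) 1)
    (G : (Fin n → ℝ) → (Fin n → ℝ))
    (hG : ∀ x i, G x i = ((1 - a) / a) * min (x i) 0) :
    (∀ α : ℝ, 0 ≤ α → ∀ x y : Fin n → ℝ,
      infNorm ((x + α • G x) - (y + α • G y)) ≥ infNorm (x - y)) ∧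
    (∀ α : ℝ, 0 < α →
      (∀ x y : Fin n → ℝ, x + α • G x = y + α • G y → x = y) ∧
      (∀ x y u v : Fin n → ℝ, x + α • G x = u → y + α • G y = v →
        infNorm (x - y) ≤ infNorm (u - v))) := by
  obtain ⟨ha0, ha1⟩ := ha
  have hc : 0 ≤ (1 - a) / a := div_nonneg (by linarith) (le_of_lt ha0)
  have main : ∀ α : ℝ, 0 ≤ α → ∀ x y : Fin n → ℝ,
      infNorm ((x + α • G x) - (y + α • G y)) ≥ infNorm (x - y) := by
    intro α hα x y
    unfold infNorm
    apply ciSup_mono (Set.Finite.bddAbove (Set.finite_range _))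
    intro i
    simp only [Pi.sub_apply, Pi.add_apply, Pi.smul_apply, smul_eq_mul, hG]
    have := key_ineq ((1 - a) / a) α (x i) (y i) hc hα
    convert this using 2
    · rfl
    ring
  refine ⟨main, fun α hα => ⟨?_, ?_⟩⟩
  · intro x y hxy
    have h := main α hα.le x y
    rw [hxy, sub_self] at h
    have h0 : infNorm (0 : Fin n → ℝ) = 0 := by
      unfold infNorm
      simp [Real.iSup_const_zero]
    rw [h0] at h
    funext i
    have hle : |(x - y) i| ≤ infNorm (x - y) := by
      unfold infNorm
      exact le_ciSup (Set.Finite.bddAbove (Set.finite_range (fun j => |(x - y) j|))) i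
    have : |(x - y) i| ≤ 0 := le_trans hle h
    have : (x - y) i = 0 := abs_nonpos_iff.mp this
    simpa [sub_eq_zero] using this
  · intro x y u v hu hv
    rw [← hu, ← hv]
    exact main α hα.le x y
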